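/- For any 0 < α < 1/2 there exists ε > 0 such that the following holds: the limsup over K → ∞ of the infimum over all tuples (b_0, …, b_K) ∈ [1,∞)^{K+1} of the sum ∑_{i=0}^{K} (1/2 + b_i/(K+2)^{1+ε}) / ((b_{i-1}+b_i)^α (b_i+b_{i+1})^α) is +∞, where by convention b_{-1} = b_{K+1} = 0. -/

import Mathlib

open Filter

/-- Subadditivity of `x ^ q` for `0 ≤ q ≤ 1` on nonnegative reals. -/
lemma my_rpow_add_le {x y q : ℝ} (hx : 0 ≤ x) (hy : 0 ≤ y) (hq0 : 0 ≤ q) (hq1 : q ≤ 1) :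
    (x + y) ^ q ≤ x ^ q + y ^ q := by
  have h := NNReal.rpow_add_le_add_rpow x.toNNReal y.toNNReal hq0 hq1
  calc (x + y) ^ q = ((x.toNNReal + y.toNNReal : NNReal) : ℝ) ^ q := by
        rw [NNReal.coe_add, Real.coe_toNNReal _ hx, Real.coe_toNNReal _ hy]
    _ = (((x.toNNReal + y.toNNReal) ^ q : NNReal) : ℝ) := by rw [← NNReal.coe_rpow]
    _ ≤ ((x.toNNReal ^ q + y.toNNReal ^ q : NNReal) : ℝ) := NNReal.coe_le_coe.2 h
    _ = x ^ q + y ^ q := by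
        rw [NNReal.coe_add, NNReal.coe_rpow, NNReal.coe_rpow,
          Real.coe_toNNReal _ hx, Real.coe_toNNReal _ hy]

/-- A Hölder-type step: `∑ v^p ≤ (∑ v/u)^p * (∑ u^(p/β))^β` when `p + β = 1`. -/
lemma my_holder (I : Finset ℤ) (u v : ℤ → ℝ) {p β : ℝ} (hp : 0 < p) (hβ : 0 < β)
    (hpβ : p + β = 1) (hu : ∀ i ∈ I, 1 ≤ u i) (hv : ∀ i ∈ I, 0 ≤ v i) :
    ∑ i ∈ I, v i ^ p ≤ (∑ i ∈ I, v i / u i) ^ p * (∑ i ∈ I, u i ^ (p / β)) ^ β := by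
  have hconj : Real.HolderConjugate (1 / p) (1 / β) := by
    rw [Real.holderConjugate_iff]
    constructor
    · rw [lt_div_iff₀ hp]; linarith
    · rw [one_div, one_div, inv_inv, inv_inv]; exact hpβ
  have hu0 : ∀ i ∈ I, 0 < u i := fun i hi => lt_of_lt_of_le one_pos (hu i hi)
  have H := Real.inner_le_Lp_mul_Lq_of_nonneg (s := I)
      (f := fun i => (v i / u i) ^ p) (g := fun i => u i ^ p) hconj
      (fun i hi => Real.rpow_nonneg (div_nonneg (hv i hi) (hu0 i hi).le) _)
      (fun i hi => Real.rpow_nonneg (hu0 i hi).le _)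
  have e1 : ∑ i ∈ I, ((v i / u i) ^ p) * (u i ^ p) = ∑ i ∈ I, v i ^ p := by
    refine Finset.sum_congr rfl fun i hi => ?_
    rw [← Real.mul_rpow (div_nonneg (hv i hi) (hu0 i hi).le) (hu0 i hi).le,
      div_mul_cancel₀ _ (hu0 i hi).ne']
  have e2 : ∑ i ∈ I, ((v i / u i) ^ p) ^ (1 / p) = ∑ i ∈ I, v i / u i := by
    refine Finset.sum_congr rfl fun i hi => ?_
    rw [← Real.rpow_mul (div_nonneg (hv i hi) (hu0 i hi).le),
      mul_one_div_cancel hp.ne', Real.rpow_one]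
  have e3 : ∑ i ∈ I, (u i ^ p) ^ (1 / β) = ∑ i ∈ I, u i ^ (p / β) := by
    refine Finset.sum_congr rfl fun i hi => ?_
    rw [← Real.rpow_mul (hu0 i hi).le, mul_one_div]
  rw [e1, e2, e3, one_div_one_div, one_div_one_div] at H
  exact H

/-- The main quantitative lower bound. -/
lemma my_key (α : ℝ) (hα0 : 0 < α) (hα : α < 1/2) (N : ℝ) (hN : 1 ≤ N) (K : ℕ) (b : ℤ → ℝ)
    (hb1 : ∀ i ∈ Finset.Icc (0:ℤ) (K:ℤ), 1 ≤ b i)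
    (hb0 : ∀ i, i ∉ Finset.Icc (0:ℤ) (K:ℤ) → b i = 0) :
    ((K:ℝ) + 1) ≤ 3 ^ (2*α/(1-2*α)) * 2 * N ^ (2*α) *
      ∑ i ∈ Finset.Icc (0:ℤ) (K:ℤ),
        (1/2 + b i / N) / ((b (i-1) + b i) ^ α * (b i + b (i+1)) ^ α) := by
  have hN0 : 0 < N := lt_of_lt_of_le one_pos hN
  set I : Finset ℤ := Finset.Icc (0:ℤ) (K:ℤ) with hI
  have hbnn : ∀ i, 0 ≤ b i := by
    intro i
    by_cases h : i ∈ I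
    · linarith [hb1 i h]
    · rw [hb0 i h]
  set u : ℤ → ℝ := fun i => (b (i-1) + b i) ^ α * (b i + b (i+1)) ^ α with hudef
  suffices h : ((K:ℝ) + 1) ≤ 3 ^ (2*α/(1-2*α)) * 2 * N ^ (2*α) *
      ∑ i ∈ I, (1/2 + b i / N) / u i by
    simpa only [hudef] using h
  set p : ℝ := 1 - 2*α with hpdef
  set β : ℝ := 2*α with hβdef
  have hβ0 : 0 < β := by rw [hβdef]; linarith
  have hp0 : 0 < p := by rw [hpdef]; linarith
  have hp1 : p ≤ 1 := by rw [hpdef]; linarith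
  have hpβ : p + β = 1 := by rw [hpdef, hβdef]; ring
  have hu1 : ∀ i ∈ I, 1 ≤ u i := by
    intro i hi
    have h1 : 1 ≤ b (i-1) + b i := by have := hb1 i hi; have := hbnn (i-1); linarith
    have h2 : 1 ≤ b i + b (i+1) := by have := hb1 i hi; have := hbnn (i+1); linarith
    have q1 := Real.one_le_rpow h1 hα0.le
    have q2 := Real.one_le_rpow h2 hα0.le
    calc (1:ℝ) = 1 * 1 := by ring
      _ ≤ (b (i-1) + b i) ^ α * (b i + b (i+1)) ^ α :=
          mul_le_mul q1 q2 one_pos.le (by linarith)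
  have hu0 : ∀ i ∈ I, 0 < u i := fun i hi => lt_of_lt_of_le one_pos (hu1 i hi)
  have huc : ∀ i ∈ I, u i ≤ (b (i-1) + b i + b (i+1)) ^ β := by
    intro i hi
    have hcpos : 0 < b (i-1) + b i + b (i+1) := by
      have := hb1 i hi; have := hbnn (i-1); have := hbnn (i+1); linarith
    have e : (b (i-1) + b i + b (i+1)) ^ β
        = (b (i-1) + b i + b (i+1)) ^ α * (b (i-1) + b i + b (i+1)) ^ α := by
      rw [← Real.rpow_add hcpos]; congr 1; rw [hβdef]; ring
    rw [e, hudef]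
    have h1 : (b (i-1) + b i) ^ α ≤ (b (i-1) + b i + b (i+1)) ^ α :=
      Real.rpow_le_rpow (by have := hbnn (i-1); have := hbnn i; linarith)
        (by have := hbnn (i+1); linarith) hα0.le
    have h2 : (b i + b (i+1)) ^ α ≤ (b (i-1) + b i + b (i+1)) ^ α :=
      Real.rpow_le_rpow (by have := hbnn (i+1); have := hbnn i; linarith)
        (by have := hbnn (i-1); linarith) hα0.le
    exact mul_le_mul h1 h2
      (Real.rpow_nonneg (by have := hbnn i; have := hbnn (i+1); linarith) _)
      (Real.rpow_nonneg hcpos.le _)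
  set P : ℝ := ∑ i ∈ I, b i ^ p with hPdef
  have hPany : ∀ J : Finset ℤ, ∑ i ∈ J, b i ^ p ≤ P := by
    intro J
    have h1 : ∑ i ∈ J, b i ^ p = ∑ i ∈ J ∩ I, b i ^ p := by
      refine (Finset.sum_subset Finset.inter_subset_left fun x hx hx' => ?_).symm
      have hxI : x ∉ I := fun h => hx' (Finset.mem_inter.2 ⟨hx, h⟩)
      rw [hb0 x hxI, Real.zero_rpow hp0.ne']
    rw [h1]
    exact Finset.sum_le_sum_of_subset_of_nonneg Finset.inter_subset_right
      (fun i _ _ => Real.rpow_nonneg (hbnn i) _)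
  have hcard : (I.card : ℝ) = (K:ℝ) + 1 := by
    rw [hI, Int.card_Icc]
    have h : ((K:ℤ) + 1 - 0) = ((K + 1 : ℕ) : ℤ) := by push_cast; ring
    rw [h, Int.toNat_natCast]
    push_cast; ring
  have hKP : ((K:ℝ) + 1) ≤ P := by
    calc ((K:ℝ) + 1) = ∑ _i ∈ I, (1:ℝ) := by
          rw [Finset.sum_const, nsmul_eq_mul, mul_one, hcard]
      _ ≤ P := Finset.sum_le_sum fun i hi => Real.one_le_rpow (hb1 i hi) hp0.le
  have hP0 : 0 < P := lt_of_lt_of_le (by positivity) hKP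
  set T : ℝ := ∑ i ∈ I, u i ^ (p / β) with hTdef
  have hT3P : T ≤ 3 * P := by
    have hbd : ∀ i ∈ I, u i ^ (p / β) ≤ b (i-1) ^ p + b i ^ p + b (i+1) ^ p := by
      intro i hi
      have hcpos : (0:ℝ) ≤ b (i-1) + b i + b (i+1) := by
        have := hbnn (i-1); have := hbnn i; have := hbnn (i+1); linarith
      have h1 : u i ^ (p / β) ≤ ((b (i-1) + b i + b (i+1)) ^ β) ^ (p / β) :=
        Real.rpow_le_rpow (le_trans one_pos.le (hu1 i hi)) (huc i hi)
          (le_of_lt (div_pos hp0 hβ0))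
      have h2 : ((b (i-1) + b i + b (i+1)) ^ β) ^ (p / β)
          = (b (i-1) + b i + b (i+1)) ^ p := by
        have hβne : β ≠ 0 := hβ0.ne'
        rw [← Real.rpow_mul hcpos, show β * (p/β) = p by field_simp]
      have h3 : (b (i-1) + b i + b (i+1)) ^ p ≤ (b (i-1) + b i) ^ p + b (i+1) ^ p :=
        my_rpow_add_le (by have := hbnn (i-1); have := hbnn i; linarith) (hbnn (i+1))
          hp0.le hp1
      have h4 : (b (i-1) + b i) ^ p ≤ b (i-1) ^ p + b i ^ p :=
        my_rpow_add_le (hbnn (i-1)) (hbnn i) hp0.le hp1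
      calc u i ^ (p / β) ≤ (b (i-1) + b i + b (i+1)) ^ p := by rw [← h2]; exact h1
        _ ≤ (b (i-1) + b i) ^ p + b (i+1) ^ p := h3
        _ ≤ b (i-1) ^ p + b i ^ p + b (i+1) ^ p := by linarith
    have hsplit : ∑ i ∈ I, (b (i-1) ^ p + b i ^ p + b (i+1) ^ p)
        = (∑ i ∈ I, b (i-1) ^ p) + (∑ i ∈ I, b i ^ p) + (∑ i ∈ I, b (i+1) ^ p) := by
      rw [← Finset.sum_add_distrib, ← Finset.sum_add_distrib]
    have hsh : ∀ c : ℤ, ∑ i ∈ I, b (i + c) ^ p ≤ P := by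
      intro c
      have h : ∑ i ∈ I, b (i + c) ^ p = ∑ j ∈ I.map (addRightEmbedding c), b j ^ p := by
        rw [Finset.sum_map]
        rfl
      rw [h]
      exact hPany _
    have hm1 : ∑ i ∈ I, b (i-1) ^ p ≤ P := by
      have := hsh (-1)
      simpa [sub_eq_add_neg] using this
    have hp1' : ∑ i ∈ I, b (i+1) ^ p ≤ P := hsh 1
    calc T ≤ ∑ i ∈ I, (b (i-1) ^ p + b i ^ p + b (i+1) ^ p) := Finset.sum_le_sum hbd
      _ = (∑ i ∈ I, b (i-1) ^ p) + P + (∑ i ∈ I, b (i+1) ^ p) := by rw [hsplit]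
      _ ≤ 3 * P := by linarith
  have hT0 : 0 ≤ T := Finset.sum_nonneg fun i hi =>
    Real.rpow_nonneg (le_trans one_pos.le (hu1 i hi)) _
  set A : ℝ := ∑ i ∈ I, 1 / u i with hAdef
  set D : ℝ := ∑ i ∈ I, b i / u i with hDdef
  have hA0 : 0 ≤ A := Finset.sum_nonneg fun i hi =>
    div_nonneg one_pos.le (hu0 i hi).le
  have hD0 : 0 ≤ D := Finset.sum_nonneg fun i hi => div_nonneg (hbnn i) (hu0 i hi).le
  set S : ℝ := ∑ i ∈ I, (1/2 + b i / N) / u i with hSdef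
  have hS0 : 0 < S := by
    apply Finset.sum_pos
    · intro i hi
      apply div_pos _ (hu0 i hi)
      have : 0 ≤ b i / N := div_nonneg (hbnn i) hN0.le
      linarith
    · exact ⟨0, by simp [hI]⟩
  have hHA : ((K:ℝ) + 1) ≤ A ^ p * T ^ β := by
    have h := my_holder I u (fun _ => 1) hp0 hβ0 hpβ hu1 (fun i _ => one_pos.le)
    have e : ∑ i ∈ I, (1:ℝ) ^ p = (K:ℝ) + 1 := by
      simp only [Real.one_rpow]
      rw [Finset.sum_const, nsmul_eq_mul, mul_one, hcard]
    rw [e] at h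
    exact h
  have hHB : P ≤ D ^ p * T ^ β := my_holder I u b hp0 hβ0 hpβ hu1 (fun i _ => hbnn i)
  have hTβ : T ^ β ≤ 3 ^ β * P ^ β := by
    rw [← Real.mul_rpow (by norm_num) hP0.le]
    exact Real.rpow_le_rpow hT0 hT3P hβ0.le
  have hPβpos : 0 < P ^ β := Real.rpow_pos_of_pos hP0 _
  have hPp : P ^ p ≤ 3 ^ β * D ^ p := by
    have h1 : P ^ p * P ^ β ≤ (3 ^ β * D ^ p) * P ^ β := by
      calc P ^ p * P ^ β = P := by rw [← Real.rpow_add hP0, hpβ, Real.rpow_one]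
        _ ≤ D ^ p * T ^ β := hHB
        _ ≤ D ^ p * (3 ^ β * P ^ β) :=
            mul_le_mul_of_nonneg_left hTβ (Real.rpow_nonneg hD0 _)
        _ = (3 ^ β * D ^ p) * P ^ β := by ring
    exact le_of_mul_le_mul_right h1 hPβpos
  have hPβD : P ^ β ≤ 3 ^ (β*β/p) * D ^ β := by
    have h1 := Real.rpow_le_rpow (Real.rpow_nonneg hP0.le p) hPp
      (le_of_lt (div_pos hβ0 hp0))
    have e1 : (P ^ p) ^ (β/p) = P ^ β := by
      have hpne : p ≠ 0 := hp0.ne'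
      rw [← Real.rpow_mul hP0.le, show p * (β/p) = β by field_simp]
    have e2 : (3 ^ β * D ^ p) ^ (β/p) = 3 ^ (β*β/p) * D ^ β := by
      have hpne : p ≠ 0 := hp0.ne'
      rw [Real.mul_rpow (Real.rpow_nonneg (by norm_num) _) (Real.rpow_nonneg hD0 _),
        ← Real.rpow_mul (by norm_num : (0:ℝ) ≤ 3), ← Real.rpow_mul hD0,
        show β * (β/p) = β*β/p by ring, show p * (β/p) = β by field_simp]
    rw [e1, e2] at h1
    exact h1
  have hmain : ((K:ℝ) + 1) ≤ 3 ^ (β/p) * A ^ p * D ^ β := by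
    have h1 : ((K:ℝ) + 1) ≤ A ^ p * (3 ^ β * P ^ β) :=
      le_trans hHA (mul_le_mul_of_nonneg_left hTβ (Real.rpow_nonneg hA0 _))
    have h2 : A ^ p * (3 ^ β * P ^ β) ≤ A ^ p * (3 ^ β * (3 ^ (β*β/p) * D ^ β)) := by
      apply mul_le_mul_of_nonneg_left _ (Real.rpow_nonneg hA0 _)
      exact mul_le_mul_of_nonneg_left hPβD (Real.rpow_nonneg (by norm_num) _)
    have e : (3:ℝ) ^ β * (3 ^ (β*β/p) * D ^ β) = 3 ^ (β/p) * D ^ β := by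
      rw [← mul_assoc, ← Real.rpow_add (by norm_num : (0:ℝ) < 3)]
      congr 2
      have hβeq : β + β*β/p = (β*(p+β))/p := by field_simp
      rw [hβeq, hpβ, mul_one]
    rw [e] at h2
    calc ((K:ℝ) + 1) ≤ A ^ p * (3 ^ (β/p) * D ^ β) := le_trans h1 h2
      _ = 3 ^ (β/p) * A ^ p * D ^ β := by ring
  have hAS : A ≤ 2 * S := by
    rw [hAdef, hSdef, Finset.mul_sum]
    apply Finset.sum_le_sum
    intro i hi
    rw [← mul_div_assoc]
    refine (div_le_div_iff_of_pos_right (hu0 i hi)).2 ?_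
    have : 0 ≤ b i / N := div_nonneg (hbnn i) hN0.le
    linarith
  have hDS : D ≤ N * S := by
    rw [hDdef, hSdef, Finset.mul_sum]
    apply Finset.sum_le_sum
    intro i hi
    rw [← mul_div_assoc]
    refine (div_le_div_iff_of_pos_right (hu0 i hi)).2 ?_
    have hNe : N * (1/2 + b i / N) = N/2 + b i := by
      field_simp
    rw [hNe]
    linarith [hN0]
  have h2p : (2:ℝ) ^ p ≤ 2 := by
    calc (2:ℝ) ^ p ≤ (2:ℝ) ^ (1:ℝ) :=
          Real.rpow_le_rpow_of_exponent_le (by norm_num) hp1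
      _ = 2 := Real.rpow_one 2
  have hfinal : (3:ℝ) ^ (β/p) * A ^ p * D ^ β ≤ (3:ℝ) ^ (β/p) * 2 * N ^ β * S := by
    have hc3 : (0:ℝ) ≤ 3 ^ (β/p) := Real.rpow_nonneg (by norm_num) _
    have hAp : A ^ p ≤ (2*S) ^ p := Real.rpow_le_rpow hA0 hAS hp0.le
    have hDβ : D ^ β ≤ (N*S) ^ β := Real.rpow_le_rpow hD0 hDS hβ0.le
    have hNβ0 : (0:ℝ) ≤ N ^ β := Real.rpow_nonneg hN0.le _
    calc (3:ℝ) ^ (β/p) * A ^ p * D ^ β ≤ (3:ℝ) ^ (β/p) * (2*S) ^ p * (N*S) ^ β := by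
          apply mul_le_mul (mul_le_mul_of_nonneg_left hAp hc3) hDβ
            (Real.rpow_nonneg hD0 _) (by positivity)
      _ = (3:ℝ) ^ (β/p) * (2 ^ p * S ^ p) * (N ^ β * S ^ β) := by
          rw [Real.mul_rpow (by norm_num) hS0.le, Real.mul_rpow hN0.le hS0.le]
      _ = (3:ℝ) ^ (β/p) * 2 ^ p * N ^ β * (S ^ p * S ^ β) := by ring
      _ = (3:ℝ) ^ (β/p) * 2 ^ p * N ^ β * S := by
          rw [← Real.rpow_add hS0, hpβ, Real.rpow_one]
      _ ≤ (3:ℝ) ^ (β/p) * 2 * N ^ β * S := by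
          have h1 : (3:ℝ) ^ (β/p) * 2 ^ p ≤ (3:ℝ) ^ (β/p) * 2 :=
            mul_le_mul_of_nonneg_left h2p hc3
          have h2 : (3:ℝ) ^ (β/p) * 2 ^ p * N ^ β ≤ (3:ℝ) ^ (β/p) * 2 * N ^ β :=
            mul_le_mul_of_nonneg_right h1 hNβ0
          exact mul_le_mul_of_nonneg_right h2 hS0.le
  exact le_trans hmain hfinal

/-- For any `0 < α < 1/2` there exists `ε > 0` such that the limsup over `K → ∞` of the
infimum over all tuples `(b_0, …, b_K) ∈ [1,∞)^{K+1}` of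
`∑_{i=0}^{K} (1/2 + b_i/(K+2)^{1+ε}) / ((b_{i-1}+b_i)^α (b_i+b_{i+1})^α)` is `+∞`,
with the convention `b_{-1} = b_{K+1} = 0`. -/
theorem stmt0 (α : ℝ) (hα0 : 0 < α) (hα : α < 1/2) :
    ∃ ε : ℝ, 0 < ε ∧ ∀ A : ℝ, ∃ᶠ K : ℕ in atTop, ∀ b : ℤ → ℝ,
      (∀ i ∈ Finset.Icc (0:ℤ) (K:ℤ), 1 ≤ b i) →
      (∀ i, i ∉ Finset.Icc (0:ℤ) (K:ℤ) → b i = 0) →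
      A < ∑ i ∈ Finset.Icc (0:ℤ) (K:ℤ),
        (1/2 + b i / ((K:ℝ)+2) ^ ((1:ℝ)+ε)) /
          ((b (i-1) + b i) ^ α * (b i + b (i+1)) ^ α) := by
  have h2α : 0 < 1 - 2*α := by linarith
  refine ⟨(1-2*α)/(4*α), by positivity, ?_⟩
  intro A
  apply Filter.Eventually.frequently
  set C : ℝ := 3 ^ (2*α/(1-2*α)) * 2 with hC
  have hC0 : 0 < C := by positivity
  have htend : Tendsto (fun K : ℕ => ((K:ℝ)+2) ^ ((1-2*α)/2)) atTop atTop := by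
    apply (tendsto_rpow_atTop (by positivity)).comp
    exact tendsto_atTop_add_const_right _ 2 tendsto_natCast_atTop_atTop
  filter_upwards [htend.eventually_gt_atTop (2 * C * A)] with K hK
  intro b hb1 hb0
  have hK2 : (0:ℝ) < (K:ℝ)+2 := by positivity
  set N : ℝ := ((K:ℝ)+2) ^ ((1:ℝ)+(1-2*α)/(4*α)) with hNdef
  have hN1 : (1:ℝ) ≤ N := Real.one_le_rpow (by linarith) (by positivity)
  have hkey := my_key α hα0 hα N hN1 K b hb1 hb0
  have hNβ : N ^ (2*α) = ((K:ℝ)+2) ^ ((1+2*α)/2) := by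
    rw [hNdef, ← Real.rpow_mul hK2.le]
    congr 1
    field_simp
    ring
  set S : ℝ := ∑ i ∈ Finset.Icc (0:ℤ) (K:ℤ),
      (1/2 + b i / N) / ((b (i-1) + b i) ^ α * (b i + b (i+1)) ^ α) with hS
  set X : ℝ := ((K:ℝ)+2) ^ ((1+2*α)/2) with hX
  have hX0 : 0 < X := Real.rpow_pos_of_pos hK2 _
  have hY0 : 0 < ((K:ℝ)+2) ^ ((1-2*α)/2) := Real.rpow_pos_of_pos hK2 _
  have hXY : X * ((K:ℝ)+2) ^ ((1-2*α)/2) = (K:ℝ)+2 := by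
    rw [hX, ← Real.rpow_add hK2, show (1+2*α)/2 + (1-2*α)/2 = 1 by ring, Real.rpow_one]
  rw [hNβ] at hkey
  have hkey' : (K:ℝ)+1 ≤ C * X * S := by
    rw [hC]
    exact hkey
  have hlt : C * X * A < (K:ℝ)+1 := by
    have hA' : A < ((K:ℝ)+2) ^ ((1-2*α)/2) / (2*C) := by
      rw [lt_div_iff₀ (by positivity)]
      nlinarith [hK]
    calc C * X * A < C * X * (((K:ℝ)+2) ^ ((1-2*α)/2) / (2*C)) :=
          mul_lt_mul_of_pos_left hA' (by positivity)
      _ = X * (((K:ℝ)+2) ^ ((1-2*α)/2)) / 2 := by field_simp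
      _ = ((K:ℝ)+2)/2 := by rw [hXY]
      _ ≤ (K:ℝ)+1 := by linarith
  have hfin : C * X * A < C * X * S := lt_of_lt_of_le hlt hkey'
  exact lt_of_mul_lt_mul_left hfin (by positivity)
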